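/- arXiv:2401.12197 — 3 statements merged into one kernel-verified Lean document; each statement's English description precedes it below -/
import Mathlib

section
/- Let {Z_n} be i.i.d. Bernoulli(p) random variables. Then the probability of the event {for all n ≥ 1, Z_1 + ... + Z_n > n/2} tends to 1 as p → 1. -/
open MeasureTheory ProbabilityTheory
open scoped ENNReal

theorem stmt10 :
    ∀ ε : ℝ, 0 < ε → ∃ p₀ : ℝ≥0∞, p₀ < 1 ∧
      ∀ (p : ℝ≥0∞) (hp : p ≤ 1), p₀ < p →
        ∀ (Ω : Type) (_ : MeasurableSpace Ω) (μ : Measure Ω), IsProbabilityMeasure μ →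
          ∀ Z : ℕ → Ω → Bool,
            iIndepFun Z μ →
            (∀ n, μ.map (Z n) = (PMF.bernoulli p.toNNReal (by simpa using ENNReal.toNNReal_mono ENNReal.one_ne_top hp)).toMeasure) →
            1 - ENNReal.ofReal ε ≤
              μ {ω | ∀ n : ℕ, 1 ≤ n →
                (n : ℝ) / 2 < ∑ i ∈ Finset.range n, (if Z i ω then (1 : ℝ) else 0)} := by
  intro ε hε
  have hδpos : (0:ℝ) < min (1/8) (ε/16) := lt_min (by norm_num) (by positivity)
  set δ : ℝ := min (1/8) (ε/16) with hδdef
  refine ⟨1 - ENNReal.ofReal δ, ?_, ?_⟩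
  · exact ENNReal.sub_lt_self ENNReal.one_ne_top one_ne_zero
      (ENNReal.ofReal_pos.2 hδpos).ne'
  intro p hp hpgt Ω mΩ μ hμ Z hindep hmap
  set d : ℝ≥0∞ := ENNReal.ofReal δ with hd
  have hd8 : d ≤ (8:ℝ≥0∞)⁻¹ := by
    rw [hd]
    calc ENNReal.ofReal δ ≤ ENNReal.ofReal (1/8) :=
          ENNReal.ofReal_le_ofReal (min_le_left _ _)
      _ = (8:ℝ≥0∞)⁻¹ := by
          rw [show (1/8:ℝ) = (8:ℝ)⁻¹ by norm_num,
            ENNReal.ofReal_inv_of_pos (by norm_num), ENNReal.ofReal_ofNat]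
  have hd1 : d ≤ 1 := le_trans hd8 (by
    rw [show (1:ℝ≥0∞) = 1⁻¹ by simp]
    exact ENNReal.inv_le_inv' (by norm_num))
  set q : ℝ≥0∞ := 1 - p with hqdef
  have hq : q ≤ d := by
    rw [hqdef]
    refine tsub_le_iff_right.2 ?_
    have h2 : (1:ℝ≥0∞) - d + d ≤ p + d := add_le_add_left hpgt.le d
    rwa [tsub_add_cancel_of_le hd1, add_comm] at h2
  have hq1 : q ≤ 1 := tsub_le_self
  -- single trial failure probability
  have hZfalse : ∀ i, μ ((Z i) ⁻¹' {false}) = q := by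
    intro i
    have hae : AEMeasurable (Z i) μ := by
      by_contra h
      have h1 := hmap i
      rw [Measure.map_of_not_aemeasurable h] at h1
      have h2 : ((PMF.bernoulli p.toNNReal (by simpa using ENNReal.toNNReal_mono ENNReal.one_ne_top hp)).toMeasure) Set.univ = 1 := measure_univ
      rw [← h1] at h2
      simp at h2
    rw [← Measure.map_apply_of_aemeasurable hae (measurableSet_singleton false), hmap i,
      PMF.toMeasure_apply_singleton _ _ (measurableSet_singleton false)]
    show ((1 - p.toNNReal : NNReal) : ℝ≥0∞) = 1 - p
    rw [ENNReal.coe_sub, ENNReal.coe_one, ENNReal.coe_toNNReal (ne_top_of_le_ne_top ENNReal.one_ne_top hp)]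
  -- measure of "all false on S"
  have hC : ∀ S : Finset ℕ, μ (⋂ i ∈ S, (Z i) ⁻¹' ({false} : Set Bool)) = q ^ S.card := by
    intro S
    rw [hindep.measure_inter_preimage_eq_mul S (fun i _ => MeasurableSet.of_discrete)]
    rw [Finset.prod_congr rfl (fun i _ => hZfalse i), Finset.prod_const]
  set r : ℝ≥0∞ := 4 * q with hr
  -- per-length bound
  have hB : ∀ m : ℕ,
      μ {ω | (∑ i ∈ Finset.range m, (if Z i ω then (1:ℝ) else 0)) ≤ (m:ℝ)/2}
        ≤ r ^ (m - m/2) := by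
    intro m
    set k := m - m/2 with hk
    set F := (Finset.range m).powerset.filter (fun S => k ≤ S.card) with hF
    have hsub : {ω | (∑ i ∈ Finset.range m, (if Z i ω then (1:ℝ) else 0)) ≤ (m:ℝ)/2} ⊆
        ⋃ S ∈ F, (⋂ i ∈ S, (Z i) ⁻¹' ({false} : Set Bool)) := by
      intro ω hω
      simp only [Set.mem_setOf_eq] at hω
      set T := (Finset.range m).filter (fun i => Z i ω = true) with hT
      set S := (Finset.range m).filter (fun i => ¬ (Z i ω = true)) with hS
      have hTsum : (∑ i ∈ Finset.range m, (if Z i ω then (1:ℝ) else 0)) = (T.card : ℝ) := by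
        rw [hT, Finset.card_filter]
        push_cast
        exact Finset.sum_congr rfl (fun i _ => by by_cases h : Z i ω <;> simp [h])
      have hT2 : 2 * T.card ≤ m := by
        have : (2 * T.card : ℝ) ≤ (m : ℝ) := by
          rw [hTsum] at hω; linarith
        exact_mod_cast this
      have hcardsum : T.card + S.card = m := by
        rw [hT, hS, Finset.card_filter_add_card_filter_not, Finset.card_range]
      have hSk : k ≤ S.card := by omega
      refine Set.mem_biUnion (show S ∈ F by
        rw [hF]
        exact Finset.mem_filter.2 ⟨Finset.mem_powerset.2 (Finset.filter_subset _ _), hSk⟩) ?_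
      simp only [Set.mem_iInter, Set.mem_preimage, Set.mem_singleton_iff]
      intro i hi
      have := (Finset.mem_filter.1 (hS ▸ hi)).2
      simpa using this
    calc μ {ω | (∑ i ∈ Finset.range m, (if Z i ω then (1:ℝ) else 0)) ≤ (m:ℝ)/2}
        ≤ μ (⋃ S ∈ F, (⋂ i ∈ S, (Z i) ⁻¹' ({false} : Set Bool))) := measure_mono hsub
      _ ≤ ∑ S ∈ F, μ (⋂ i ∈ S, (Z i) ⁻¹' ({false} : Set Bool)) :=
          measure_biUnion_finset_le _ _
      _ ≤ ∑ _S ∈ F, q ^ k := by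
          refine Finset.sum_le_sum (fun S hS => ?_)
          rw [hC S]
          exact pow_le_pow_right_of_le_one' hq1 (Finset.mem_filter.1 hS).2
      _ = (F.card : ℝ≥0∞) * q ^ k := by rw [Finset.sum_const, nsmul_eq_mul]
      _ ≤ (2:ℝ≥0∞) ^ m * q ^ k := by
          refine mul_le_mul_left ?_ _
          have : F.card ≤ 2 ^ m := by
            calc F.card ≤ (Finset.range m).powerset.card := Finset.card_filter_le _ _
              _ = 2 ^ m := by rw [Finset.card_powerset, Finset.card_range]
          exact_mod_cast this
      _ ≤ (4:ℝ≥0∞) ^ k * q ^ k := by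
          refine mul_le_mul_left ?_ _
          calc (2:ℝ≥0∞) ^ m ≤ (2:ℝ≥0∞) ^ (2 * k) := pow_le_pow_right₀ one_le_two (by omega)
            _ = (4:ℝ≥0∞) ^ k := by rw [pow_mul]; norm_num
      _ = r ^ k := by rw [hr, mul_pow]
  -- assemble
  set A := {ω | ∀ n : ℕ, 1 ≤ n →
      (n : ℝ) / 2 < ∑ i ∈ Finset.range n, (if Z i ω then (1 : ℝ) else 0)} with hA
  have hAc : Aᶜ ⊆ ⋃ n : ℕ,
      {ω | (∑ i ∈ Finset.range (n+1), (if Z i ω then (1:ℝ) else 0)) ≤ ((n+1:ℕ):ℝ)/2} := by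
    intro ω hω
    simp only [hA, Set.mem_compl_iff, Set.mem_setOf_eq, not_forall, not_lt] at hω
    obtain ⟨n, hn1, hn⟩ := hω
    refine Set.mem_iUnion.2 ⟨n - 1, ?_⟩
    have hn' : n - 1 + 1 = n := Nat.sub_add_cancel hn1
    simp only [Set.mem_setOf_eq, hn']
    exact hn
  have hr2 : r ≤ (2:ℝ≥0∞)⁻¹ := by
    rw [hr]
    calc 4 * q ≤ 4 * d := mul_le_mul_right hq 4
      _ ≤ 4 * (8:ℝ≥0∞)⁻¹ := mul_le_mul_right hd8 4
      _ = (2:ℝ≥0∞)⁻¹ := by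
          rw [show (8:ℝ≥0∞) = 4 * 2 by norm_num,
            ENNReal.mul_inv (by norm_num) (by norm_num), ← mul_assoc,
            ENNReal.mul_inv_cancel (by norm_num) (by norm_num), one_mul]
  have hinv : (1 - r)⁻¹ ≤ 2 := by
    have h2 : (2:ℝ≥0∞)⁻¹ ≤ 1 - r := by
      refine ENNReal.le_sub_of_add_le_left (hr2.trans_lt (ENNReal.inv_lt_top.2 (by norm_num))).ne ?_
      rw [add_comm]
      calc (2:ℝ≥0∞)⁻¹ + r ≤ 2⁻¹ + 2⁻¹ := add_le_add le_rfl hr2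
        _ = 1 := by
            rw [← two_mul, ENNReal.mul_inv_cancel (by norm_num) (by norm_num)]
    calc (1 - r)⁻¹ ≤ ((2:ℝ≥0∞)⁻¹)⁻¹ := ENNReal.inv_le_inv' h2
      _ = 2 := inv_inv _
  have hAcle : μ Aᶜ ≤ ENNReal.ofReal ε := by
    have h1 : μ Aᶜ ≤ ∑' n : ℕ, r ^ (n/2 + 1) := by
      calc μ Aᶜ ≤ μ (⋃ n : ℕ,
            {ω | (∑ i ∈ Finset.range (n+1), (if Z i ω then (1:ℝ) else 0)) ≤ ((n+1:ℕ):ℝ)/2}) :=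
            measure_mono hAc
        _ ≤ ∑' n : ℕ, μ {ω | (∑ i ∈ Finset.range (n+1),
              (if Z i ω then (1:ℝ) else 0)) ≤ ((n+1:ℕ):ℝ)/2} := measure_iUnion_le _
        _ ≤ ∑' n : ℕ, r ^ ((n+1) - (n+1)/2) := ENNReal.tsum_le_tsum (fun n => hB (n+1))
        _ = ∑' n : ℕ, r ^ (n/2 + 1) := tsum_congr (fun n => by congr 1; omega)
    have heo : ∑' n : ℕ, r ^ (n/2 + 1) = 2 * ∑' k : ℕ, r ^ (k+1) := by
      rw [← tsum_even_add_odd ENNReal.summable ENNReal.summable, two_mul]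
      congr 1
      · exact tsum_congr (fun k => by congr 1; omega)
      · exact tsum_congr (fun k => by congr 1; omega)
    have hgeo : ∑' k : ℕ, r ^ (k+1) = r * (1 - r)⁻¹ := ENNReal.tsum_geometric_add_one r
    calc μ Aᶜ ≤ ∑' n : ℕ, r ^ (n/2 + 1) := h1
      _ = 2 * (r * (1 - r)⁻¹) := by rw [heo, hgeo]
      _ ≤ 2 * (r * 2) := mul_le_mul_right (mul_le_mul_right hinv r) 2
      _ = 4 * r := by ring
      _ = 16 * q := by rw [hr]; ring
      _ ≤ 16 * d := mul_le_mul_right hq 16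
      _ ≤ 16 * ENNReal.ofReal (ε/16) := mul_le_mul_right
          (ENNReal.ofReal_le_ofReal (min_le_right _ _)) 16
      _ = ENNReal.ofReal ε := by
          rw [← ENNReal.ofReal_ofNat, ← ENNReal.ofReal_mul (by norm_num)]
          congr 1; ring
  have hsplit : (1:ℝ≥0∞) ≤ μ A + μ Aᶜ := by
    have := measure_union_le (μ := μ) A Aᶜ
    rwa [Set.union_compl_self, measure_univ] at this
  calc 1 - ENNReal.ofReal ε ≤ 1 - μ Aᶜ := tsub_le_tsub_left hAcle 1
    _ ≤ μ A := tsub_le_iff_right.2 hsplit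
end

section
/- Let P_n = (1/n) Σ_{i=1}^n δ_{(X_i,Y_i)} with X_1,...,X_n pairwise distinct points of R^d, let ξ have density f_ξ independent of a pair (X,Y) ~ P_n, and let P_n^{*ξ} be the law of (X+ξ, Y+ξ). Then for (X,Y) ~ P_n^{*ξ}, almost surely E[Y - X | X] = (Σ_{i=1}^n (Y_i - X_i) f_ξ(X - X_i)) / (Σ_{i=1}^n f_ξ(X - X_i)). -/
open MeasureTheory
open scoped ENNReal

private lemma map_finsetSum' {α β ι : Type*} [MeasurableSpace α] [MeasurableSpace β]
    (s : Finset ι) (μ : ι → Measure α) {T : α → β} (hT : Measurable T) :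
    Measure.map T (∑ i ∈ s, μ i) = ∑ i ∈ s, Measure.map T (μ i) := by
  classical
  induction s using Finset.induction with
  | empty => simp
  | insert _ _ h ih =>
    rw [Finset.sum_insert h, Finset.sum_insert h, Measure.map_add _ _ hT, ih]

private lemma aux_map_integral {d : ℕ} (f : EuclideanSpace ℝ (Fin d) → ℝ)
    (hf : Measurable f) (hfpos : ∀ x, 0 ≤ f x) (a b : EuclideanSpace ℝ (Fin d))
    (h : EuclideanSpace ℝ (Fin d) × EuclideanSpace ℝ (Fin d) → EuclideanSpace ℝ (Fin d))
    (hh : StronglyMeasurable h) :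
    ∫ z, h z ∂(Measure.map (fun ξ => (a + ξ, b + ξ))
        (volume.withDensity fun x => ENNReal.ofReal (f x))) =
      ∫ u, f (u - a) • h (u, u + (b - a)) := by
  have hT : Measurable fun ξ : EuclideanSpace ℝ (Fin d) => (a + ξ, b + ξ) :=
    (measurable_const.add measurable_id).prodMk (measurable_const.add measurable_id)
  rw [integral_map hT.aemeasurable hh.aestronglyMeasurable]
  have hd : (fun x => ENNReal.ofReal (f x)) = fun x => ((f x).toNNReal : ℝ≥0∞) := rfl
  rw [hd, integral_withDensity_eq_integral_smul hf.real_toNNReal]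
  have key : ∀ ξ, (f ξ).toNNReal • h (a + ξ, b + ξ)
      = (fun u => f (u - a) • h (u, u + (b - a))) (ξ + a) := by
    intro ξ
    simp only [add_sub_cancel_right]
    rw [NNReal.smul_def, Real.coe_toNNReal _ (hfpos ξ)]
    have hpair : (a + ξ, b + ξ) = (ξ + a, ξ + a + (b - a)) := by
      rw [Prod.mk.injEq]; constructor <;> abel
    rw [hpair]
  simp_rw [key]
  exact integral_add_right_eq_self (fun u => f (u - a) • h (u, u + (b - a))) a

theorem stmt16 {d : ℕ} (n : ℕ) (hn : 0 < n)
    (X Y : ℕ → EuclideanSpace ℝ (Fin d))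
    (hdist : ∀ i j, i < n → j < n → i ≠ j → X i ≠ X j)
    (f : EuclideanSpace ℝ (Fin d) → ℝ)
    (hf : Measurable f) (hfpos : ∀ x, 0 < f x)
    (hfdens : ∫ x, f x = 1)
    (Pn : Measure (EuclideanSpace ℝ (Fin d) × EuclideanSpace ℝ (Fin d)))
    (hPn : Pn = ((n : ℝ≥0∞))⁻¹ • ∑ i ∈ Finset.range n, Measure.dirac (X i, Y i))
    (νξ : Measure (EuclideanSpace ℝ (Fin d)))
    (hνξ : νξ = volume.withDensity (fun x => ENNReal.ofReal (f x)))
    (Pnξ : Measure (EuclideanSpace ℝ (Fin d) × EuclideanSpace ℝ (Fin d)))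
    (hPnξ : Pnξ = Measure.map (fun q => (q.1.1 + q.2, q.1.2 + q.2)) (Pn.prod νξ))
    (mX : MeasurableSpace (EuclideanSpace ℝ (Fin d) × EuclideanSpace ℝ (Fin d)))
    (hmX : mX = MeasurableSpace.comap Prod.fst inferInstance) :
    Pnξ[(fun z => z.2 - z.1) | mX] =ᵐ[Pnξ]
      fun z => (∑ i ∈ Finset.range n, f (z.1 - X i))⁻¹ •
        ∑ i ∈ Finset.range n, f (z.1 - X i) • (Y i - X i) := by
  classical
  subst hmX
  have hn' : (n : ℝ≥0∞) ≠ 0 := Nat.cast_ne_zero.mpr hn.ne'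
  have hfi : Integrable f := by
    by_contra hcon
    rw [integral_undef hcon] at hfdens
    norm_num at hfdens
  haveI hνprob : IsProbabilityMeasure νξ := by
    constructor
    rw [hνξ, withDensity_apply _ MeasurableSet.univ, Measure.restrict_univ,
      ← ofReal_integral_eq_lintegral_ofReal hfi
        (Filter.Eventually.of_forall fun x => (hfpos x).le),
      hfdens, ENNReal.ofReal_one]
  haveI hPnprob : IsProbabilityMeasure Pn := by
    constructor
    rw [hPn, Measure.smul_apply, Measure.coe_finset_sum, Finset.sum_apply]
    simp only [measure_univ, Finset.sum_const, Finset.card_range, nsmul_eq_mul, mul_one,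
      smul_eq_mul]
    exact ENNReal.inv_mul_cancel hn' (ENNReal.natCast_ne_top n)
  have hT : ∀ i, Measurable fun ξ : EuclideanSpace ℝ (Fin d) => (X i + ξ, Y i + ξ) := fun i =>
    (measurable_const.add measurable_id).prodMk (measurable_const.add measurable_id)
  have hTmain : Measurable fun q : (EuclideanSpace ℝ (Fin d) × EuclideanSpace ℝ (Fin d)) ×
      EuclideanSpace ℝ (Fin d) => (q.1.1 + q.2, q.1.2 + q.2) :=
    (measurable_fst.fst.add measurable_snd).prodMk (measurable_fst.snd.add measurable_snd)
  haveI : IsProbabilityMeasure Pnξ := by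
    rw [hPnξ]; exact Measure.isProbabilityMeasure_map hTmain.aemeasurable
  -- decomposition
  have hprod : Pn.prod νξ
      = (n : ℝ≥0∞)⁻¹ • ∑ i ∈ Finset.range n, (Measure.dirac (X i, Y i)).prod νξ := by
    refine Measure.prod_eq fun s t hs ht => ?_
    rw [hPn]
    simp only [Measure.smul_apply, Measure.coe_finset_sum, Finset.sum_apply, Measure.prod_prod,
      smul_eq_mul, Finset.sum_mul, mul_assoc]
  have hdecomp : Pnξ = (n : ℝ≥0∞)⁻¹ • ∑ i ∈ Finset.range n,
      Measure.map (fun ξ => (X i + ξ, Y i + ξ)) νξ := by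
    rw [hPnξ, hprod, Measure.map_smul, map_finsetSum' _ _ hTmain]
    congr 1
    refine Finset.sum_congr rfl fun i _ => ?_
    rw [Measure.dirac_prod, Measure.map_map hTmain measurable_prodMk_left]
    rfl
  -- the conditioning σ-algebra
  have hm : MeasurableSpace.comap
        (Prod.fst : EuclideanSpace ℝ (Fin d) × EuclideanSpace ℝ (Fin d) → EuclideanSpace ℝ (Fin d))
        inferInstance ≤ (inferInstance : MeasurableSpace
      (EuclideanSpace ℝ (Fin d) × EuclideanSpace ℝ (Fin d))) :=
    measurable_fst.comap_le
  have hfstmX : Measurable[MeasurableSpace.comap Prod.fst inferInstance] (Prod.fst :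
      EuclideanSpace ℝ (Fin d) × EuclideanSpace ℝ (Fin d) → EuclideanSpace ℝ (Fin d)) :=
    Measurable.of_comap_le le_rfl
  -- the candidate function
  set S : EuclideanSpace ℝ (Fin d) → ℝ := fun u => ∑ i ∈ Finset.range n, f (u - X i) with hSdef
  set G : EuclideanSpace ℝ (Fin d) → EuclideanSpace ℝ (Fin d) :=
    fun u => (S u)⁻¹ • ∑ i ∈ Finset.range n, f (u - X i) • (Y i - X i) with hGdef
  have hS : ∀ u, 0 < S u := fun u =>
    Finset.sum_pos (fun i _ => hfpos _) (Finset.nonempty_range_iff.mpr hn.ne')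
  have hSmeas : Measurable S :=
    Finset.measurable_sum _ fun i _ => hf.comp (measurable_id.sub measurable_const)
  have hGmeas : Measurable G := by
    rw [hGdef]
    exact hSmeas.inv.smul (Finset.measurable_sum _ fun i _ =>
      (hf.comp (measurable_id.sub measurable_const)).smul_const _)
  set C : ℝ := ∑ i ∈ Finset.range n, ‖Y i - X i‖ with hCdef
  have hGbound : ∀ u, ‖G u‖ ≤ C := by
    intro u
    rw [hGdef]
    calc ‖(S u)⁻¹ • ∑ i ∈ Finset.range n, f (u - X i) • (Y i - X i)‖
        = (S u)⁻¹ * ‖∑ i ∈ Finset.range n, f (u - X i) • (Y i - X i)‖ := by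
          rw [norm_smul, Real.norm_eq_abs, abs_of_nonneg (inv_nonneg.mpr (hS u).le)]
      _ ≤ (S u)⁻¹ * ∑ i ∈ Finset.range n, f (u - X i) * ‖Y i - X i‖ := by
          refine mul_le_mul_of_nonneg_left ?_ (inv_nonneg.mpr (hS u).le)
          refine (norm_sum_le (Finset.range n) fun i => f (u - X i) • (Y i - X i)).trans
            (le_of_eq (Finset.sum_congr rfl fun i _ => ?_))
          rw [norm_smul, Real.norm_eq_abs, abs_of_nonneg (hfpos _).le]
      _ ≤ (S u)⁻¹ * ∑ i ∈ Finset.range n, S u * ‖Y i - X i‖ := by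
          refine mul_le_mul_of_nonneg_left (Finset.sum_le_sum fun i hi =>
            mul_le_mul_of_nonneg_right ?_ (norm_nonneg _)) (inv_nonneg.mpr (hS u).le)
          exact Finset.single_le_sum (f := fun j => f (u - X j))
            (fun j _ => (hfpos (u - X j)).le) hi
      _ = C := by
          rw [← Finset.mul_sum, ← mul_assoc, inv_mul_cancel₀ (hS u).ne', one_mul, hCdef]
  have hkey : ∀ u, S u • G u = ∑ i ∈ Finset.range n, f (u - X i) • (Y i - X i) := fun u =>
    smul_inv_smul₀ (hS u).ne' _
  -- integrability of the target
  have h_f_int : Integrable (fun z : EuclideanSpace ℝ (Fin d) × EuclideanSpace ℝ (Fin d) =>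
      z.2 - z.1) Pnξ := by
    rw [hdecomp, integrable_smul_measure (ENNReal.inv_ne_zero.mpr (ENNReal.natCast_ne_top n))
      (ENNReal.inv_ne_top.mpr hn')]
    refine integrable_finset_sum_measure.mpr fun i _ => ?_
    refine (integrable_map_measure (g := fun z : EuclideanSpace ℝ (Fin d) × EuclideanSpace ℝ (Fin d) => z.2 - z.1) (continuous_snd.sub continuous_fst).aestronglyMeasurable
      (hT i).aemeasurable).mpr ?_
    refine (integrable_const (Y i - X i)).congr
      (Filter.Eventually.of_forall fun ξ => ?_)
    simp only [Function.comp_apply]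
    abel
  -- integrability of the candidate
  have hGint : Integrable (fun z : EuclideanSpace ℝ (Fin d) × EuclideanSpace ℝ (Fin d) =>
      G z.1) Pnξ :=
    ⟨(hGmeas.comp measurable_fst).aestronglyMeasurable,
      HasFiniteIntegral.of_bounded (C := C) (Filter.Eventually.of_forall fun z => hGbound z.1)⟩
  -- the set-integral computation
  have key : ∀ (A : Set (EuclideanSpace ℝ (Fin d))), MeasurableSet A →
      ∀ (h : EuclideanSpace ℝ (Fin d) × EuclideanSpace ℝ (Fin d) → EuclideanSpace ℝ (Fin d)),
      StronglyMeasurable h →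
      (∀ i, Integrable (((Prod.fst ⁻¹' A).indicator h) ∘
        (fun ξ => (X i + ξ, Y i + ξ))) νξ) →
      ∫ z in Prod.fst ⁻¹' A, h z ∂Pnξ = ((n : ℝ≥0∞)⁻¹).toReal •
        ∑ i ∈ Finset.range n, ∫ u in A, f (u - X i) • h (u, u + (Y i - X i)) := by
    intro A hA h hh hint
    have hsmeas : MeasurableSet (Prod.fst ⁻¹' A :
        Set (EuclideanSpace ℝ (Fin d) × EuclideanSpace ℝ (Fin d))) :=
      hA.preimage measurable_fst
    have hint' : ∀ i ∈ Finset.range n, Integrable ((Prod.fst ⁻¹' A).indicator h)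
        (Measure.map (fun ξ => (X i + ξ, Y i + ξ)) νξ) := fun i _ =>
      (integrable_map_measure (hh.indicator hsmeas).aestronglyMeasurable
        (hT i).aemeasurable).mpr (hint i)
    rw [← integral_indicator hsmeas, hdecomp, integral_smul_measure,
      integral_finset_sum_measure hint']
    congr 1
    refine Finset.sum_congr rfl fun i _ => ?_
    rw [hνξ, aux_map_integral f hf (fun x => (hfpos x).le) (X i) (Y i) _
      (hh.indicator hsmeas)]
    have hind : ∀ u, f (u - X i) • ((Prod.fst ⁻¹' A).indicator h) (u, u + (Y i - X i))
        = A.indicator (fun u => f (u - X i) • h (u, u + (Y i - X i))) u := by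
      intro u
      by_cases hu : u ∈ A
      · simp [Set.indicator_of_mem, hu, Set.indicator_of_mem (show (u, u + (Y i - X i)) ∈
          Prod.fst ⁻¹' A from hu)]
      · simp [Set.indicator_of_notMem, hu, Set.indicator_of_notMem
          (show (u, u + (Y i - X i)) ∉ Prod.fst ⁻¹' A from hu)]
    simp_rw [hind]
    rw [integral_indicator hA]
  -- apply uniqueness of conditional expectation
  refine (ae_eq_condExp_of_forall_setIntegral_eq hm h_f_int
    (fun s _ _ => hGint.integrableOn) (fun s hs _ => ?_) ?_).symm
  · -- set integrals agree
    obtain ⟨A, hA, rfl⟩ := hs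
    have hintG : ∀ i, Integrable (((Prod.fst ⁻¹' A).indicator fun z => G z.1) ∘
        fun ξ => (X i + ξ, Y i + ξ)) νξ := by
      intro i
      refine ⟨((((hGmeas.comp measurable_fst).stronglyMeasurable).indicator
        (hA.preimage measurable_fst)).comp_measurable (hT i)).aestronglyMeasurable,
        HasFiniteIntegral.of_bounded (C := C) (Filter.Eventually.of_forall fun ξ => ?_)⟩
      refine (norm_indicator_le_norm_self _ _).trans ?_
      exact hGbound _
    have hintF : ∀ i, Integrable (((Prod.fst ⁻¹' A).indicator fun z :
        EuclideanSpace ℝ (Fin d) × EuclideanSpace ℝ (Fin d) => z.2 - z.1) ∘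
        fun ξ => (X i + ξ, Y i + ξ)) νξ := by
      intro i
      refine ⟨(((continuous_snd.sub continuous_fst).stronglyMeasurable.indicator
        (hA.preimage measurable_fst)).comp_measurable (hT i)).aestronglyMeasurable,
        HasFiniteIntegral.of_bounded (C := ‖Y i - X i‖)
          (Filter.Eventually.of_forall fun ξ => ?_)⟩
      refine (norm_indicator_le_norm_self _ _).trans (le_of_eq ?_)
      show ‖(Y i + ξ) - (X i + ξ)‖ = _
      congr 1
      abel
    rw [key A hA (fun z => G z.1) ((hGmeas.comp measurable_fst).stronglyMeasurable) hintG,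
      key A hA (fun z => z.2 - z.1) (continuous_snd.sub continuous_fst).stronglyMeasurable hintF]
    have hfiA : ∀ i, IntegrableOn (fun u => f (u - X i)) A volume := fun i =>
      (hfi.comp_sub_right (X i)).integrableOn
    have hGmem : MemLp G ⊤ (volume.restrict A) :=
      memLp_top_of_bound hGmeas.aestronglyMeasurable C (Filter.Eventually.of_forall hGbound)
    show ((n : ℝ≥0∞)⁻¹).toReal • ∑ i ∈ Finset.range n, (∫ u in A, f (u - X i) • G u)
        = ((n : ℝ≥0∞)⁻¹).toReal • ∑ i ∈ Finset.range n,
          (∫ u in A, f (u - X i) • (u + (Y i - X i) - u))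
    simp_rw [add_sub_cancel_left]
    congr 1
    calc ∑ i ∈ Finset.range n, ∫ u in A, f (u - X i) • G u
        = ∫ u in A, ∑ i ∈ Finset.range n, f (u - X i) • G u :=
          (integral_finset_sum _ fun i _ => (hfiA i).smul_of_top_left hGmem).symm
      _ = ∫ u in A, ∑ i ∈ Finset.range n, f (u - X i) • (Y i - X i) := by
          refine integral_congr_ae (Filter.Eventually.of_forall fun u => ?_)
          show ∑ i ∈ Finset.range n, f (u - X i) • G u = _
          rw [← Finset.sum_smul]
          exact hkey u
      _ = ∑ i ∈ Finset.range n, ∫ u in A, f (u - X i) • (Y i - X i) :=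
          integral_finset_sum _ fun i _ => (hfiA i).smul_const (Y i - X i)
  · exact StronglyMeasurable.aestronglyMeasurable
      (hGmeas.stronglyMeasurable.comp_measurable hfstmX)
end

section
/- For any real s > 2 and d ≥ 1, the sum Σ_{l ≥ 0} 2^{l/2} / max(1, ⌊(2^{2^l})^{1/d}⌋ - 1) is bounded above by L·√d for a universal constant L independent of d. -/
set_option maxHeartbeats 800000

open Real Finset

theorem stmt19 :
    ∃ L : ℝ, 0 < L ∧
      ∀ (s : ℝ), 2 < s → ∀ d : ℕ, 1 ≤ d →
        (∑' l : ℕ, (2 : ℝ) ^ ((l : ℝ) / 2) /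
            max 1 ((⌊((2 : ℝ) ^ ((2 : ℕ) ^ l : ℕ)) ^ ((1 : ℝ) / d)⌋ : ℝ) - 1))
          ≤ L * Real.sqrt d := by
  refine ⟨10, by norm_num, fun s _ d hd => ?_⟩
  have hd0 : (0:ℝ) < d := by exact_mod_cast hd
  set f : ℕ → ℝ := fun l => (2 : ℝ) ^ ((l : ℝ) / 2) /
      max 1 ((⌊((2 : ℝ) ^ ((2 : ℕ) ^ l : ℕ)) ^ ((1 : ℝ) / d)⌋ : ℝ) - 1) with hf
  set m : ℕ := Nat.log 2 d + 2 with hm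
  -- basic facts
  have h2d : (2:ℝ) * d ≤ 2 ^ m := by
    have h : d < 2 ^ (Nat.log 2 d + 1) := Nat.lt_pow_succ_log_self (by norm_num) d
    have h2 : 2 * d < 2 ^ m := by
      rw [hm, pow_succ]
      omega
    have := (Nat.cast_lt (α := ℝ)).mpr h2
    push_cast at this
    linarith
  have h4d : (2:ℝ) ^ m ≤ 4 * d := by
    have h : 2 ^ Nat.log 2 d ≤ d := Nat.pow_log_le_self 2 (by omega)
    have h2 : 2 ^ m ≤ 4 * d := by
      rw [hm, pow_succ, pow_succ]
      omega
    have := (Nat.cast_le (α := ℝ)).mpr h2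
    push_cast at this
    linarith
  have hDone : ∀ l : ℕ, (1:ℝ) ≤ max 1 ((⌊((2 : ℝ) ^ ((2 : ℕ) ^ l : ℕ)) ^ ((1 : ℝ) / d)⌋ : ℝ) - 1) :=
    fun l => le_max_left _ _
  have hfnn : ∀ l, 0 ≤ f l := fun l =>
    div_nonneg (rpow_nonneg (by norm_num) _) (le_trans zero_le_one (hDone l))
  -- head bound: f l ≤ (√2)^l
  have hpow : ∀ l : ℕ, (2:ℝ) ^ ((l:ℝ)/2) = Real.sqrt 2 ^ l := by
    intro l
    rw [show ((l:ℝ)/2) = (1/2) * l by ring, Real.rpow_mul (by norm_num), Real.rpow_natCast,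
      ← Real.sqrt_eq_rpow]
  have hhead : ∀ l, f l ≤ Real.sqrt 2 ^ l := by
    intro l
    rw [hf]
    simp only []
    calc (2 : ℝ) ^ ((l : ℝ) / 2) /
        max 1 ((⌊((2 : ℝ) ^ ((2 : ℕ) ^ l : ℕ)) ^ ((1 : ℝ) / d)⌋ : ℝ) - 1)
        ≤ (2 : ℝ) ^ ((l : ℝ) / 2) := div_le_self (rpow_nonneg (by norm_num) _) (hDone l)
      _ = Real.sqrt 2 ^ l := hpow l
  -- geometric ratio
  set r : ℝ := (2:ℝ) ^ (-(3:ℝ)/2) with hr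
  have hr0 : 0 ≤ r := rpow_nonneg (by norm_num) _
  have hr1 : r < 1 := rpow_lt_one_of_one_lt_of_neg (by norm_num) (by norm_num)
  have hrhalf : r ≤ 1/2 := by
    have h := rpow_le_rpow_of_exponent_le (x := (2:ℝ)) (by norm_num)
      (show (-(3:ℝ)/2) ≤ -1 by norm_num)
    rw [Real.rpow_neg_one] at h
    rw [hr]; linarith
  -- tail bound
  have htail : ∀ k : ℕ, f (k + m) ≤ (1/2) * Real.sqrt 2 ^ m * r ^ k := by
    intro k
    have hX : ((2 : ℝ) ^ ((2 : ℕ) ^ (k + m) : ℕ)) ^ ((1 : ℝ) / d)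
        = (2:ℝ) ^ (((2:ℕ) ^ (k+m) : ℕ) / (d:ℝ)) := by
      rw [← Real.rpow_natCast (2:ℝ) ((2:ℕ)^(k+m)), ← Real.rpow_mul (by norm_num)]
      ring_nf
    set e : ℝ := ((2:ℕ) ^ (k+m) : ℕ) / (d:ℝ) with he
    have hkle : (k:ℝ) + 1 ≤ 2 ^ k := by
      have h : k + 1 ≤ 2 ^ k := Nat.lt_two_pow_self
      exact_mod_cast h
    have he2 : 2 * ((k:ℝ) + 1) ≤ e := by
      rw [he, le_div_iff₀ hd0]
      push_cast
      rw [pow_add]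
      have h1 : (2:ℝ) * ((k:ℝ)+1) * d ≤ 2 * (2:ℝ)^k * d := by
        nlinarith
      have h2 : (2:ℝ) * (2:ℝ)^k * d = ((2:ℝ)*d) * 2^k := by ring
      have h3 : ((2:ℝ)*d) * 2^k ≤ 2^m * 2^k :=
        mul_le_mul_of_nonneg_right h2d (by positivity)
      calc (2:ℝ) * ((k:ℝ)+1) * d ≤ ((2:ℝ)*d) * 2^k := by nlinarith
        _ ≤ 2^m * 2^k := h3
        _ = (2:ℝ)^k * 2^m := by ring
    have hX4 : (4:ℝ) ≤ (2:ℝ) ^ e := by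
      have h4 : (2:ℝ) ^ (2:ℝ) = 4 := by
        rw [show (2:ℝ) = ((2:ℕ):ℝ) by norm_num, Real.rpow_natCast]
        norm_num
      calc (4:ℝ) = (2:ℝ) ^ (2:ℝ) := h4.symm
        _ ≤ (2:ℝ) ^ e := rpow_le_rpow_of_exponent_le (by norm_num) (by nlinarith)
    have hfloor : (2:ℝ)^e / 2 ≤ (⌊(2:ℝ)^e⌋ : ℝ) - 1 := by
      have := Int.sub_one_lt_floor ((2:ℝ)^e)
      linarith
    have hD : (2:ℝ)^e / 2 ≤ max 1 ((⌊(2:ℝ)^e⌋ : ℝ) - 1) :=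
      le_trans hfloor (le_max_right _ _)
    have step1 : f (k + m) ≤ (2:ℝ) ^ (((k+m:ℕ):ℝ)/2) / ((2:ℝ)^e / 2) := by
      rw [hf]
      simp only [hX]
      exact div_le_div_of_nonneg_left (rpow_nonneg (by norm_num) _) (by linarith) hD
    have step2 : (2:ℝ) ^ (((k+m:ℕ):ℝ)/2) / ((2:ℝ)^e / 2)
        = 2 * (2:ℝ) ^ (((k+m:ℕ):ℝ)/2 - e) := by
      rw [Real.rpow_sub (by norm_num)]
      field_simp
    have step3 : (2:ℝ) ^ (((k+m:ℕ):ℝ)/2 - e) ≤ (2:ℝ) ^ ((m:ℝ)/2 - 2 - 3/2 * k) := by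
      apply rpow_le_rpow_of_exponent_le (by norm_num)
      push_cast
      linarith
    have step4 : 2 * (2:ℝ) ^ ((m:ℝ)/2 - 2 - 3/2 * k) = (1/2) * Real.sqrt 2 ^ m * r ^ k := by
      rw [show (m:ℝ)/2 - 2 - 3/2*k = (m:ℝ)/2 + (-2) + (-(3:ℝ)/2 * k) by ring,
        Real.rpow_add (by norm_num), Real.rpow_add (by norm_num), hpow m,
        Real.rpow_mul (by norm_num : (0:ℝ) ≤ 2) (-(3:ℝ)/2) (k:ℝ), Real.rpow_natCast, ← hr]
      have h2 : (2:ℝ) ^ (-2:ℝ) = 1/4 := by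
        rw [show (-2:ℝ) = -(2:ℝ) by ring, Real.rpow_neg (by norm_num),
          show (2:ℝ) = ((2:ℕ):ℝ) by norm_num, Real.rpow_natCast]
        norm_num
      rw [h2]
      ring
    calc f (k+m) ≤ (2:ℝ) ^ (((k+m:ℕ):ℝ)/2) / ((2:ℝ)^e / 2) := step1
      _ = 2 * (2:ℝ) ^ (((k+m:ℕ):ℝ)/2 - e) := step2
      _ ≤ 2 * (2:ℝ) ^ ((m:ℝ)/2 - 2 - 3/2 * k) := by linarith [step3]
      _ = (1/2) * Real.sqrt 2 ^ m * r ^ k := step4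
  -- summability
  have hgsum : Summable (fun k : ℕ => (1/2) * Real.sqrt 2 ^ m * r ^ k) :=
    (summable_geometric_of_lt_one hr0 hr1).mul_left _
  have htailsum : Summable (fun k : ℕ => f (k + m)) :=
    Summable.of_nonneg_of_le (fun k => hfnn _) htail hgsum
  have hsum : Summable f := (summable_nat_add_iff m).mp htailsum
  -- √2^m ≤ 2√d
  have hs2 : (0:ℝ) ≤ Real.sqrt 2 := Real.sqrt_nonneg 2
  have hsqm : Real.sqrt 2 ^ m ≤ 2 * Real.sqrt d := by
    have h1 : Real.sqrt 2 ^ m = Real.sqrt ((2:ℝ)^m) := by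
      induction m with
      | zero => simp
      | succ n ih => rw [pow_succ, pow_succ, ih, ← Real.sqrt_mul (by positivity)]
    have h2 : Real.sqrt ((2:ℝ)^m) ≤ Real.sqrt (4*d) := Real.sqrt_le_sqrt h4d
    have h3 : Real.sqrt (4*(d:ℝ)) = 2 * Real.sqrt d := by
      rw [Real.sqrt_mul (by norm_num), show (4:ℝ) = 2^2 by norm_num,
        Real.sqrt_sq (by norm_num)]
    rw [h1]; rw [h3] at h2; exact h2
  -- head sum bound
  have hsqrt2gt : (4:ℝ)/3 ≤ Real.sqrt 2 := by
    nlinarith [Real.sq_sqrt (show (0:ℝ) ≤ 2 by norm_num), Real.sqrt_nonneg 2]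
  have hheadsum : ∑ l ∈ Finset.range m, f l ≤ 3 * Real.sqrt 2 ^ m := by
    calc ∑ l ∈ Finset.range m, f l ≤ ∑ l ∈ Finset.range m, Real.sqrt 2 ^ l :=
          Finset.sum_le_sum (fun l _ => hhead l)
      _ = (Real.sqrt 2 ^ m - 1) / (Real.sqrt 2 - 1) := geom_sum_eq (by nlinarith) m
      _ ≤ 3 * Real.sqrt 2 ^ m := by
          rw [div_le_iff₀ (by nlinarith)]
          nlinarith [pow_nonneg hs2 m]
  -- tail sum bound
  have htailtsum : ∑' k, f (k + m) ≤ Real.sqrt 2 ^ m := by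
    have h1 : ∑' k, f (k + m) ≤ ∑' k : ℕ, (1/2) * Real.sqrt 2 ^ m * r ^ k :=
      Summable.tsum_le_tsum htail htailsum hgsum
    have h2 : ∑' k : ℕ, (1/2) * Real.sqrt 2 ^ m * r ^ k
        = (1/2) * Real.sqrt 2 ^ m * (1 - r)⁻¹ := by
      rw [tsum_mul_left, tsum_geometric_of_lt_one hr0 hr1]
    have h3 : (1 - r)⁻¹ ≤ 2 := by
      rw [show (2:ℝ) = (1/2:ℝ)⁻¹ by norm_num]
      apply inv_anti₀ (by norm_num) (by linarith)
    have h4 : (1/2) * Real.sqrt 2 ^ m * (1 - r)⁻¹ ≤ Real.sqrt 2 ^ m := by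
      have hp : (0:ℝ) ≤ Real.sqrt 2 ^ m := pow_nonneg hs2 m
      nlinarith [inv_nonneg.mpr (show (0:ℝ) ≤ 1 - r by linarith)]
    linarith
  -- combine
  have hsplit : ∑ l ∈ Finset.range m, f l + ∑' k, f (k + m) = ∑' l, f l :=
    Summable.sum_add_tsum_nat_add m hsum
  have hsd : (0:ℝ) ≤ Real.sqrt d := Real.sqrt_nonneg d
  calc ∑' l, f l = ∑ l ∈ Finset.range m, f l + ∑' k, f (k + m) := hsplit.symm
    _ ≤ 3 * Real.sqrt 2 ^ m + Real.sqrt 2 ^ m := by linarith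
    _ = 4 * Real.sqrt 2 ^ m := by ring
    _ ≤ 4 * (2 * Real.sqrt d) := by linarith
    _ ≤ 10 * Real.sqrt d := by linarith
end
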